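/- Let X be a real Banach space, let T : X → X be a bounded linear operator, let n > 0 be a real number, and let M ≥ 0 be such that ‖n^k T^k‖ ≤ M for every natural number k (i.e., M is an upper bound for sup_k ‖n^k T^k‖). Then for every τ ≥ 0, the operator exp(n² τ T) ∘ T² (where exp denotes the operator exponential given by the norm-convergent series Σ_{k≥0} (n² τ)^k T^k / k!) satisfies the bound ‖exp(n² τ T) ∘ T²‖ ≤ M e^{n τ} / n². -/

import Mathlib

/-- If `T` is a bounded operator on a Banach space with `‖n^k T^k‖ ≤ M` for all
`k`, then for every `τ ≥ 0` one has `‖exp(n² τ T) ∘ T²‖ ≤ M e^{n τ} / n²`. -/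
theorem exp_comp_sq_norm_bound
    {X : Type*} [NormedAddCommGroup X] [NormedSpace ℝ X] [CompleteSpace X]
    (T : X →L[ℝ] X) (n : ℝ) (hn : 0 < n) (M : ℝ) (hM : 0 ≤ M)
    (hbound : ∀ k : ℕ, ‖(n ^ k) • T ^ k‖ ≤ M) :
    ∀ τ : ℝ, 0 ≤ τ →
      ‖(NormedSpace.exp ((n ^ 2 * τ) • T)).comp (T ^ 2)‖
        ≤ M * Real.exp (n * τ) / n ^ 2 := by
  intro τ hτ
  have hn' : n ≠ 0 := ne_of_gt hn
  set a : ℝ := n ^ 2 * τ with ha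
  have ha0 : 0 ≤ a := by positivity
  have hT : ∀ k : ℕ, ‖T ^ k‖ ≤ M / n ^ k := by
    intro k
    rw [le_div_iff₀ (pow_pos hn k)]
    have h := hbound k
    rw [norm_smul (n ^ k) (T ^ k), Real.norm_eq_abs,
      abs_of_nonneg (pow_pos hn k).le] at h
    linarith [h]
  have hsum : Summable (fun k : ℕ => ((k.factorial : ℝ))⁻¹ • (a • T) ^ k) :=
    NormedSpace.expSeries_summable' (a • T)
  have hcomp : (NormedSpace.exp (a • T)).comp (T ^ 2)
      = ∑' k : ℕ, (((k.factorial : ℝ))⁻¹ • (a • T) ^ k).comp (T ^ 2) := by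
    rw [NormedSpace.exp_eq_tsum ℝ]
    exact ((ContinuousLinearMap.compL ℝ X X X).flip (T ^ 2)).map_tsum hsum
  rw [hcomp]
  have hhs : HasSum (fun k : ℕ => M / n ^ 2 * ((n * τ) ^ k / (k.factorial : ℝ)))
      (M / n ^ 2 * Real.exp (n * τ)) := by
    have := (NormedSpace.expSeries_div_hasSum_exp (n * τ)).mul_left (M / n ^ 2)
    rwa [← Real.exp_eq_exp_ℝ] at this
  have hterm : ∀ k : ℕ, ‖(((k.factorial : ℝ))⁻¹ • (a • T) ^ k).comp (T ^ 2)‖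
      ≤ M / n ^ 2 * ((n * τ) ^ k / (k.factorial : ℝ)) := by
    intro k
    have h1 : (((k.factorial : ℝ))⁻¹ • (a • T) ^ k).comp (T ^ 2)
        = (((k.factorial : ℝ))⁻¹ * a ^ k) • T ^ (k + 2) := by
      set_option synthInstance.maxHeartbeats 1000000 in
      rw [smul_pow, pow_add, smul_smul]
      rfl
    rw [h1, norm_smul (((k.factorial : ℝ))⁻¹ * a ^ k) (T ^ (k + 2)), Real.norm_eq_abs]
    have hfac : (0:ℝ) < (k.factorial : ℝ) := by positivity
    have habs : |((k.factorial : ℝ))⁻¹ * a ^ k| = ((k.factorial : ℝ))⁻¹ * a ^ k := by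
      rw [abs_of_nonneg]; positivity
    rw [habs]
    calc ((k.factorial : ℝ))⁻¹ * a ^ k * ‖T ^ (k + 2)‖
        ≤ ((k.factorial : ℝ))⁻¹ * a ^ k * (M / n ^ (k + 2)) := by
          apply mul_le_mul_of_nonneg_left (hT (k + 2))
          positivity
      _ = M / n ^ 2 * ((n * τ) ^ k / (k.factorial : ℝ)) := by
          rw [ha]
          field_simp
          ring
  calc ‖∑' k : ℕ, (((k.factorial : ℝ))⁻¹ • (a • T) ^ k).comp (T ^ 2)‖
      ≤ M / n ^ 2 * Real.exp (n * τ) := tsum_of_norm_bounded hhs hterm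
    _ = M * Real.exp (n * τ) / n ^ 2 := by ring
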